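/- For any integral convex polytope P, the maximal degree of an element of the minimal Hilbert basis H(C(P)) is at most the maximal degree of an element of Box(P) ∪ (P̃ ∩ ℤ^{N+1}); that is, μ_Hilb(P) ≤ max(μ_hole(P), 1). -/

import Mathlib

open scoped BigOperators Pointwise

/-- Points of `ℝ^N`. -/
abbrev Pt (N : ℕ) := Fin N → ℝ

/-- A point has integer coordinates. -/
def IsLat {N : ℕ} (x : Pt N) : Prop := ∀ i, ∃ z : ℤ, x i = (z : ℝ)

/-- Lattice points of a set. -/
def latPts {N : ℕ} (P : Set (Pt N)) : Set (Pt N) := {x ∈ P | IsLat x}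

/-- The dilated polytope `kP`. -/
def dil {N : ℕ} (k : ℕ) (P : Set (Pt N)) : Set (Pt N) := (k : ℝ) • P

/-- `α` is a sum of `k` lattice points of `P`. -/
def DecomposesIn {N : ℕ} (P : Set (Pt N)) (k : ℕ) (α : Pt N) : Prop :=
  ∃ f : Fin k → Pt N, (∀ i, f i ∈ latPts P) ∧ α = ∑ i, f i

/-- The integer decomposition property. -/
def HasIDP {N : ℕ} (P : Set (Pt N)) : Prop :=
  ∀ k : ℕ, 0 < k → ∀ α ∈ latPts (dil k P), DecomposesIn P k α

/-- Very ampleness: decomposition holds for all sufficiently large `k`. -/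
def VeryAmple {N : ℕ} (P : Set (Pt N)) : Prop :=
  ∃ k₀ : ℕ, ∀ k, k₀ ≤ k → ∀ α ∈ latPts (dil k P), DecomposesIn P k α

/-- An integral convex polytope: the convex hull of finitely many lattice points
(which include all its vertices). -/
def IsIntegralPolytope {N : ℕ} (P : Set (Pt N)) : Prop :=
  ∃ V : Finset (Pt N), (∀ v ∈ V, IsLat v) ∧ P = convexHull ℝ (V : Set (Pt N))

/-- Dimension of a polytope: the rank of the direction of its affine span. -/
noncomputable def polyDim {N : ℕ} (P : Set (Pt N)) : ℕ :=
  Module.finrank ℝ (affineSpan ℝ P).direction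

/-- Lattice points of the cone `C(P) ⊂ ℝ^{N+1}` generated by `P̃ = P × {1}`;
a point of `ℝ^{N+1}` is represented as a pair `(x, deg)`. -/
def coneLat {N : ℕ} (P : Set (Pt N)) : Set (Pt N × ℝ) :=
  {p | (∃ (m : ℕ) (c : Fin m → ℝ) (w : Fin m → Pt N),
        (∀ i, 0 ≤ c i ∧ w i ∈ P) ∧ p.1 = ∑ i, c i • w i ∧ p.2 = ∑ i, c i)
    ∧ IsLat p.1 ∧ ∃ z : ℤ, p.2 = (z : ℝ)}

/-- The monoid `ℤ_{≥0}(P̃ ∩ ℤ^{N+1})` generated by the degree-one lattice points of the cone. -/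
def genMonoid {N : ℕ} (P : Set (Pt N)) : Set (Pt N × ℝ) :=
  {p | ∃ (m : ℕ) (f : Fin m → Pt N), (∀ i, f i ∈ latPts P) ∧
        p.1 = ∑ i, f i ∧ p.2 = (m : ℝ)}

/-- `H` is the minimal Hilbert basis of the cone `C(P)`. -/
def IsMinHilbertBasis {N : ℕ} (P : Set (Pt N)) (H : Set (Pt N × ℝ)) : Prop :=
  (H.Finite ∧ H ⊆ coneLat P ∧
      coneLat P ⊆ (AddSubmonoid.closure H : Set (Pt N × ℝ))) ∧
  ∀ H' : Set (Pt N × ℝ),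
    (H'.Finite ∧ H' ⊆ coneLat P ∧
      coneLat P ⊆ (AddSubmonoid.closure H' : Set (Pt N × ℝ))) → H ⊆ H'

/-- `v` lists the vertices of an empty `d`-simplex contained in `P`. -/
def EmptySimplexIn {N : ℕ} (P : Set (Pt N)) (d : ℕ) (v : Fin (d+1) → Pt N) : Prop :=
  (∀ i, v i ∈ latPts P) ∧ AffineIndependent ℝ v ∧
    ∀ x ∈ convexHull ℝ (Set.range v), IsLat x → x ∈ Set.range v

/-- `Box(S)` of a simplex with vertex list `v`: lattice points
`Σ rᵢ (vᵢ, 1)` with `0 ≤ rᵢ < 1`. -/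
def boxSimplex {N d : ℕ} (v : Fin (d+1) → Pt N) : Set (Pt N × ℝ) :=
  {p | ∃ r : Fin (d+1) → ℝ, (∀ i, 0 ≤ r i ∧ r i < 1) ∧
      p.1 = ∑ i, r i • v i ∧ p.2 = ∑ i, r i ∧ IsLat p.1 ∧ ∃ z : ℤ, p.2 = (z : ℝ)}

/-- `Box(P)`: holes of `P`, i.e. box points of empty `d`-simplices in `P` that are not
nonnegative integer combinations of `P̃ ∩ ℤ^{N+1}`. -/
def boxP {N : ℕ} (P : Set (Pt N)) (d : ℕ) : Set (Pt N × ℝ) :=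
  (⋃ v ∈ {v : Fin (d+1) → Pt N | EmptySimplexIn P d v}, boxSimplex v) \ genMonoid P

/-- Ehrhart counting function `|nP ∩ ℤ^N|`. -/
noncomputable def ehr {N : ℕ} (P : Set (Pt N)) (n : ℕ) : ℕ := (latPts (dil n P)).ncard

/-- The `δ`-vector of a `d`-dimensional polytope, via finite differences of the
Ehrhart counting function. -/
noncomputable def deltaVec {N : ℕ} (P : Set (Pt N)) (d i : ℕ) : ℤ :=
  ∑ j ∈ Finset.range (i+1), (-1)^j * ((d+1).choose j) * (ehr P (i - j) : ℤ)

lemma IsLat.sub {x y : Pt N} (hx : IsLat x) (hy : IsLat y) : IsLat (x - y) := by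
  intro i
  obtain ⟨a, ha⟩ := hx i; obtain ⟨b, hb⟩ := hy i
  exact ⟨a - b, by simp [ha, hb]⟩

lemma isLat_sum {ι : Type*} (s : Finset ι) (f : ι → Pt N) (h : ∀ i ∈ s, IsLat (f i)) :
    IsLat (∑ i ∈ s, f i) := by
  classical
  induction s using Finset.induction_on with
  | empty => intro i; exact ⟨0, by simp⟩
  | insert _ _ hni ih =>
      rename_i a s
      rw [Finset.sum_insert hni]
      intro i
      obtain ⟨za, hza⟩ := h a (Finset.mem_insert_self a s) i
      obtain ⟨zb, hzb⟩ := ih (fun j hj => h j (Finset.mem_insert_of_mem hj)) i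
      exact ⟨za + zb, by simp [hza, hzb]⟩

lemma IsLat.nsmul {x : Pt N} (hx : IsLat x) (k : ℕ) : IsLat ((k : ℝ) • x) := by
  intro i
  obtain ⟨a, ha⟩ := hx i
  refine ⟨k * a, ?_⟩
  rw [Pi.smul_apply, ha, smul_eq_mul]
  push_cast
  ring

/-- Lattice points in a bounded region of `ℝ^N × ℝ` are finite. -/
lemma finite_latBox (B : ℝ) :
    {p : Pt N × ℝ | (IsLat p.1 ∧ ∃ z : ℤ, p.2 = (z : ℝ)) ∧ (∀ i, |p.1 i| ≤ B) ∧ |p.2| ≤ B}.Finite := by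
  classical
  have hfin : (Set.Icc (fun _ => -⌈B⌉ : Fin N → ℤ) (fun _ => ⌈B⌉) ×ˢ
      Set.Icc (-⌈B⌉ : ℤ) ⌈B⌉).Finite := (Set.finite_Icc _ _).prod (Set.finite_Icc _ _)
  apply (hfin.image (fun q : (Fin N → ℤ) × ℤ => ((fun i => (q.1 i : ℝ), (q.2 : ℝ)) : Pt N × ℝ))).subset
  rintro ⟨x, tdeg⟩ ⟨⟨hlat, z, hz⟩, hbd, hzb⟩
  replace hlat : ∀ i, ∃ zz : ℤ, x i = (zz : ℝ) := hlat
  replace hbd : ∀ i, |x i| ≤ B := hbd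
  replace hzb : |tdeg| ≤ B := hzb
  replace hz : tdeg = (z : ℝ) := hz
  choose zf hzf using hlat
  have hB := Int.le_ceil B
  refine ⟨⟨zf, z⟩, ⟨?_, ?_⟩, ?_⟩
  · constructor <;> intro i
    · have hb : |(zf i : ℝ)| ≤ B := hzf i ▸ hbd i
      have h1 : -(⌈B⌉ : ℝ) ≤ (zf i : ℝ) := by
        have := (abs_le.1 hb).1; linarith
      exact_mod_cast h1
    · have hb : |(zf i : ℝ)| ≤ B := hzf i ▸ hbd i
      have h1 : (zf i : ℝ) ≤ (⌈B⌉ : ℝ) := by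
        have := (abs_le.1 hb).2; linarith
      exact_mod_cast h1
  · rw [hz] at hzb
    constructor
    · have h1 : -(⌈B⌉:ℝ) ≤ (z:ℝ) := by have := (abs_le.1 hzb).1; linarith
      exact_mod_cast h1
    · have h1 : (z:ℝ) ≤ (⌈B⌉:ℝ) := by have := (abs_le.1 hzb).2; linarith
      exact_mod_cast h1
  · refine Prod.ext ?_ hz.symm
    funext i
    exact (hzf i).symm

/-- Coordinate bound for a polytope. -/
lemma poly_bound (V : Finset (Pt N)) :
    ∃ R : ℝ, 0 ≤ R ∧ ∀ w ∈ convexHull ℝ (V : Set (Pt N)), ∀ i, |w i| ≤ R := by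
  classical
  refine ⟨∑ v ∈ V, ∑ i, |v i|, Finset.sum_nonneg fun v _ => Finset.sum_nonneg fun i _ => abs_nonneg _, ?_⟩
  set R := ∑ v ∈ V, ∑ i, |v i| with hR
  have hVR : ∀ v ∈ V, ∀ i, |v i| ≤ R := by
    intro v hv i
    calc |v i| ≤ ∑ i, |v i| := Finset.single_le_sum (f := fun i => |v i|) (fun _ _ => abs_nonneg _) (Finset.mem_univ i)
    _ ≤ R := Finset.single_le_sum (f := fun v => ∑ i, |v i|) (fun _ _ => Finset.sum_nonneg fun _ _ => abs_nonneg _) hv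
  intro w hw i
  have hconv : Convex ℝ {x : Pt N | ∀ i, |x i| ≤ R} := by
    have : {x : Pt N | ∀ i, |x i| ≤ R} = Set.pi Set.univ (fun _ => Set.Icc (-R) R) := by
      ext x; simp [Set.mem_pi, abs_le, Pi.le_def, forall_and]
    rw [this]
    exact convex_pi fun _ _ => convex_Icc _ _
  have := convexHull_min (fun v hv => hVR v hv) hconv hw
  exact this i

/-- Barycentric coordinates for a point of the convex hull of a finite family. -/
lemma exists_coords {n : ℕ} (v : Fin n → Pt N) (hv : Function.Injective v) {y : Pt N}
    (hy : y ∈ convexHull ℝ (Set.range v)) :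
    ∃ t : Fin n → ℝ, (∀ i, 0 ≤ t i) ∧ ∑ i, t i = 1 ∧ y = ∑ i, t i • v i := by
  classical
  have hs : ((Finset.univ.image v : Finset (Pt N)) : Set (Pt N)) = Set.range v := by
    simp
  rw [← hs, Finset.convexHull_eq] at hy
  obtain ⟨w, hw0, hw1, hwy⟩ := hy
  rw [Finset.centerMass_eq_of_sum_1 _ _ hw1] at hwy
  refine ⟨fun i => w (v i), fun i => hw0 _ (Finset.mem_image_of_mem v (Finset.mem_univ i)), ?_, ?_⟩
  · rw [← hw1]; exact (Finset.sum_image (fun a _ b _ h => hv h)).symm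
  · rw [← hwy]
    rw [Finset.sum_image (fun a _ b _ h => hv h)]
    simp

lemma affineIndependent_fintype_iff {n : ℕ} (v : Fin n → Pt N) :
    AffineIndependent ℝ v ↔
      ∀ w : Fin n → ℝ, ∑ i, w i = 0 → ∑ i, w i • v i = 0 → ∀ i, w i = 0 := by
  rw [affineIndependent_iff_of_fintype]
  constructor
  · intro h w h0 hs i
    exact h w h0 (by rw [Finset.weightedVSub_eq_linear_combination _ h0]; exact hs) i
  · intro h w h0 hs i
    rw [Finset.weightedVSub_eq_linear_combination _ h0] at hs
    exact h w h0 hs i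

/-- Affine combination with coefficient sum 1 lies in the affine span of the family. -/
lemma comb_mem_affineSpan {n : ℕ} (v : Fin n → Pt N) (t : Fin n → ℝ) (ht : ∑ i, t i = 1) :
    ∑ i, t i • v i ∈ affineSpan ℝ (Set.range v) := by
  have := affineCombination_mem_affineSpan (k := ℝ) (s := (Finset.univ : Finset (Fin n))) ht v
  rwa [Finset.affineCombination_eq_linear_combination _ _ _ ht] at this

/-- Uniqueness of barycentric coordinates. -/
lemma coords_unique {n : ℕ} {v : Fin n → Pt N} (hv : AffineIndependent ℝ v)
    {s t : Fin n → ℝ} (hs1 : ∑ i, s i = 1) (ht1 : ∑ i, t i = 1)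
    (heq : ∑ i, s i • v i = ∑ i, t i • v i) : s = t := by
  have h := (affineIndependent_fintype_iff v).1 hv (s - t) ?_ ?_
  · funext i; have := h i; simpa [sub_eq_zero] using this
  · simp [Finset.sum_sub_distrib, hs1, ht1]
  · simp only [Pi.sub_apply, sub_smul, Finset.sum_sub_distrib, heq, sub_self]

/-- Extending an affinely independent family by a point outside its affine span. -/
lemma snoc_affineIndependent {n : ℕ} {v : Fin (n+1) → Pt N} (hv : AffineIndependent ℝ v)
    {u : Pt N} (hu : u ∉ affineSpan ℝ (Set.range v)) :
    AffineIndependent ℝ (Fin.snoc v u : Fin (n+2) → Pt N) := by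
  rw [affineIndependent_fintype_iff]
  intro w h0 hs
  rw [Fin.sum_univ_castSucc] at h0 hs
  simp only [Fin.snoc_castSucc, Fin.snoc_last] at hs
  by_cases hc : w (Fin.last (n+1)) = 0
  · rw [hc, zero_smul, add_zero] at hs
    rw [hc, add_zero] at h0
    have hz := (affineIndependent_fintype_iff v).1 hv _ h0 hs
    intro i
    induction i using Fin.lastCases with
    | last => exact hc
    | cast j => exact hz j
  · exfalso
    apply hu
    set c := w (Fin.last (n+1)) with hcdef
    have hsum' : ∑ i, w i.castSucc • v i = -(c • u) := eq_neg_of_add_eq_zero_left hs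
    have hcoef : ∑ i : Fin (n+1), (-(w i.castSucc) / c) = 1 := by
      rw [← Finset.sum_div]
      have h2 : ∑ i : Fin (n+1), -(w i.castSucc) = -∑ i : Fin (n+1), w i.castSucc := by simp
      rw [h2, div_eq_one_iff_eq hc]
      linarith
    have hu' : ∑ i : Fin (n+1), (-(w i.castSucc) / c) • v i = u := by
      have h1 : ∀ i : Fin (n+1), (-(w i.castSucc) / c) • v i
          = (-(1:ℝ)/c) • (w i.castSucc • v i) := by
        intro i; rw [smul_smul]; congr 1; field_simp
      rw [Finset.sum_congr rfl (fun i _ => h1 i), ← Finset.smul_sum, hsum', smul_neg, smul_smul]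
      have : (-(1:ℝ)/c) * c = -1 := by field_simp
      rw [this]
      simp
    rw [← hu']
    exact comb_mem_affineSpan v _ hcoef

/-- Replacing a vertex with positive barycentric weight keeps affine independence. -/
lemma update_affineIndependent {n : ℕ} {v : Fin n → Pt N} (hv : AffineIndependent ℝ v)
    {u : Pt N} {μ : Fin n → ℝ} (hu : u = ∑ i, μ i • v i) (hμ1 : ∑ i, μ i = 1)
    {j : Fin n} (hμj : μ j ≠ 0) :
    AffineIndependent ℝ (Function.update v j u) := by
  classical
  rw [affineIndependent_fintype_iff]
  intro a h0 hs
  have hs' : ∑ i ∈ Finset.univ.erase j, a i • v i + a j • u = 0 := by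
    rw [← Finset.sum_erase_add _ _ (Finset.mem_univ j)] at hs
    rw [← hs]
    congr 1
    · apply Finset.sum_congr rfl
      intro i hi
      rw [Function.update_of_ne (Finset.ne_of_mem_erase hi)]
    · rw [Function.update_self]
  set b : Fin n → ℝ := fun i => (if i = j then 0 else a i) + a j * μ i with hb
  have hbs : ∑ i, b i • v i = 0 := by
    have h1 : ∑ i, b i • v i
        = ∑ i, (if i = j then 0 else a i) • v i + ∑ i, (a j * μ i) • v i := by
      rw [← Finset.sum_add_distrib]
      apply Finset.sum_congr rfl
      intro i _
      rw [hb, add_smul]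
    have h2 : ∑ i, (if i = j then (0:ℝ) else a i) • v i = ∑ i ∈ Finset.univ.erase j, a i • v i := by
      rw [← Finset.sum_erase_add _ _ (Finset.mem_univ j)]
      simp only [eq_self_iff_true, if_true, zero_smul, add_zero]
      apply Finset.sum_congr rfl
      intro i hi
      rw [if_neg (Finset.ne_of_mem_erase hi)]
    have h3 : ∑ i, (a j * μ i) • v i = a j • u := by
      rw [hu, Finset.smul_sum]
      apply Finset.sum_congr rfl
      intro i _
      rw [smul_smul]
    rw [h1, h2, h3, hs']
  have hb0 : ∑ i, b i = 0 := by
    have h1 : ∑ i, b i = ∑ i, (if i = j then (0:ℝ) else a i) + a j * ∑ i, μ i := by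
      rw [Finset.mul_sum, ← Finset.sum_add_distrib]
    have h2 : ∑ i, (if i = j then (0:ℝ) else a i) = ∑ i ∈ Finset.univ.erase j, a i := by
      rw [← Finset.sum_erase_add _ _ (Finset.mem_univ j)]
      simp only [eq_self_iff_true, if_true, add_zero]
      apply Finset.sum_congr rfl
      intro i hi
      rw [if_neg (Finset.ne_of_mem_erase hi)]
    rw [h1, h2, hμ1, mul_one, Finset.sum_erase_add _ _ (Finset.mem_univ j)]
    exact h0
  have hball := (affineIndependent_fintype_iff v).1 hv b hb0 hbs
  have haj : a j = 0 := by
    have := hball j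
    rw [hb] at this
    simp only [eq_self_iff_true, if_true, zero_add] at this
    exact (mul_eq_zero.1 this).resolve_right hμj
  intro i
  by_cases h : i = j
  · rw [h]; exact haj
  · have := hball i
    rw [hb] at this
    simp only [if_neg h, haj, zero_mul, add_zero] at this
    exact this


section Geo
variable {N : ℕ}

lemma finite_latBall (B : ℝ) :
    {x : Pt N | IsLat x ∧ ∀ i, |x i| ≤ B}.Finite := by
  have h := finite_latBox (N := N) (max B 1)
  have himg := h.image Prod.fst
  apply himg.subset
  rintro x ⟨hlat, hbd⟩
  exact ⟨(x, 1), ⟨⟨hlat, 1, by norm_num⟩, fun i => (hbd i).trans (le_max_left _ _),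
    by rw [abs_one]; exact le_max_right _ _⟩, rfl⟩


lemma update_sum_smul {n : ℕ} (v : Fin n → Pt N) (u : Pt N) {μ : Fin n → ℝ}
    (hu : u = ∑ i, μ i • v i) (j : Fin n) (a : Fin n → ℝ) :
    ∑ i, a i • Function.update v j u i
      = ∑ i, ((if i = j then 0 else a i) + a j * μ i) • v i := by
  classical
  have h1 : ∑ i, ((if i = j then (0:ℝ) else a i) + a j * μ i) • v i
      = ∑ i, (if i = j then (0:ℝ) else a i) • v i + ∑ i, (a j * μ i) • v i := by
    rw [← Finset.sum_add_distrib]; apply Finset.sum_congr rfl; intro i _; rw [add_smul]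
  have h2 : ∑ i, (if i = j then (0:ℝ) else a i) • v i = ∑ i ∈ Finset.univ.erase j, a i • v i := by
    rw [← Finset.sum_erase_add _ _ (Finset.mem_univ j)]
    simp only [eq_self_iff_true, if_true, zero_smul, add_zero]
    apply Finset.sum_congr rfl
    intro i hi
    rw [if_neg (Finset.ne_of_mem_erase hi)]
  have h3 : ∑ i, (a j * μ i) • v i = a j • u := by
    rw [hu, Finset.smul_sum]; apply Finset.sum_congr rfl; intro i _; rw [smul_smul]
  have h4 : ∑ i, a i • Function.update v j u i
      = ∑ i ∈ Finset.univ.erase j, a i • v i + a j • u := by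
    rw [← Finset.sum_erase_add _ _ (Finset.mem_univ j)]
    congr 1
    · apply Finset.sum_congr rfl
      intro i hi
      rw [Function.update_of_ne (Finset.ne_of_mem_erase hi)]
    · rw [Function.update_self]
  rw [h1, h2, h3, h4]

lemma update_sum_coeff {n : ℕ} {μ : Fin n → ℝ} (hμ1 : ∑ i, μ i = 1) (j : Fin n) (a : Fin n → ℝ) :
    ∑ i, ((if i = j then 0 else a i) + a j * μ i) = ∑ i, a i := by
  classical
  rw [Finset.sum_add_distrib, ← Finset.mul_sum, hμ1, mul_one]
  have h2 : ∑ i, (if i = j then (0:ℝ) else a i) = ∑ i ∈ Finset.univ.erase j, a i := by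
    rw [← Finset.sum_erase_add _ _ (Finset.mem_univ j)]
    simp only [eq_self_iff_true, if_true, add_zero]
    apply Finset.sum_congr rfl
    intro i hi
    rw [if_neg (Finset.ne_of_mem_erase hi)]
  rw [h2, Finset.sum_erase_add _ _ (Finset.mem_univ j)]

lemma latPts_hull_finite {n : ℕ} (v : Fin n → Pt N) :
    (latPts (convexHull ℝ (Set.range v))).Finite := by
  obtain ⟨R, hR0, hRb⟩ := poly_bound (Finset.univ.image v)
  apply (finite_latBall R).subset
  intro x hx
  refine ⟨hx.2, fun i => hRb x ?_ i⟩
  have h : ((Finset.univ.image v : Finset (Pt N)) : Set (Pt N)) = Set.range v := by simp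
  rw [h]
  exact hx.1

lemma extend_simplex {P : Set (Pt N)} {V : Finset (Pt N)}
    (hV : ∀ v ∈ V, IsLat v) (hPV : P = convexHull ℝ (V : Set (Pt N))) :
    ∀ (k m : ℕ) (v : Fin (m+1) → Pt N), m + k = polyDim P →
      (∀ i, v i ∈ latPts P) → AffineIndependent ℝ v →
      ∃ v' : Fin (polyDim P + 1) → Pt N, (∀ i, v' i ∈ latPts P) ∧ AffineIndependent ℝ v' ∧
        Set.range v ⊆ Set.range v' := by
  intro k
  induction k with
  | zero =>
      intro m v hm hlat hai
      have hm' : m + 1 = polyDim P + 1 := by omega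
      refine ⟨v ∘ (finCongr hm'.symm), fun i => hlat _,
        hai.comp_embedding (finCongr hm'.symm).toEmbedding, ?_⟩
      rintro x ⟨i, rfl⟩
      exact ⟨finCongr hm' i, by simp⟩
  | succ k ih =>
      intro m v hm hlat hai
      have hexists : ∃ u ∈ latPts P, u ∉ affineSpan ℝ (Set.range v) := by
        by_contra hcon
        push_neg at hcon
        have hVsub : (V : Set (Pt N)) ⊆ latPts P := by
          intro x hx
          exact ⟨hPV ▸ subset_convexHull ℝ (V : Set (Pt N)) hx, hV x hx⟩
        have hspan : affineSpan ℝ P = affineSpan ℝ (V : Set (Pt N)) := by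
          rw [hPV, affineSpan_convexHull]
        have hsp : affineSpan ℝ P ≤ affineSpan ℝ (Set.range v) := by
          rw [hspan]
          exact affineSpan_le.2 (fun x hx => hcon x (hVsub hx))
        have hd := AffineSubspace.direction_le hsp
        rw [direction_affineSpan, direction_affineSpan] at hd
        haveI : FiniteDimensional ℝ (vectorSpan ℝ (Set.range v)) :=
          finiteDimensional_vectorSpan_of_finite ℝ (Set.finite_range v)
        have h1 : polyDim P ≤ Module.finrank ℝ (vectorSpan ℝ (Set.range v)) := by
          have hpd : polyDim P = Module.finrank ℝ (vectorSpan ℝ P) := by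
            unfold polyDim; rw [direction_affineSpan]
          rw [hpd]
          exact Submodule.finrank_mono hd
        have h2 : Module.finrank ℝ (vectorSpan ℝ (Set.range v)) ≤ m :=
          finrank_vectorSpan_range_le ℝ v (by simp)
        omega
      obtain ⟨u, hu1, hu2⟩ := hexists
      have hsnoc := snoc_affineIndependent hai hu2
      have hlat' : ∀ i, (Fin.snoc v u : Fin (m+2) → Pt N) i ∈ latPts P := by
        intro i
        induction i using Fin.lastCases with
        | last => rw [Fin.snoc_last]; exact hu1
        | cast j => rw [Fin.snoc_castSucc]; exact hlat j
      obtain ⟨v', hv'1, hv'2, hv'3⟩ := ih (m+1) (Fin.snoc v u) (by omega) hlat' hsnoc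
      refine ⟨v', hv'1, hv'2, ?_⟩
      refine Set.Subset.trans ?_ hv'3
      rintro x ⟨i, rfl⟩
      exact ⟨i.castSucc, Fin.snoc_castSucc ..⟩

lemma exists_empty_simplex_aux {P : Set (Pt N)} (hconvP : Convex ℝ P) {d : ℕ} :
    ∀ (n : ℕ) (v : Fin (d+1) → Pt N), (latPts (convexHull ℝ (Set.range v))).ncard ≤ n →
      (∀ i, v i ∈ latPts P) → AffineIndependent ℝ v → ∀ y ∈ convexHull ℝ (Set.range v),
      ∃ v' : Fin (d+1) → Pt N, EmptySimplexIn P d v' ∧ y ∈ convexHull ℝ (Set.range v') := by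
  intro n
  induction n with
  | zero =>
      intro v hn hlat hai y hy
      exfalso
      have hv0 : v 0 ∈ latPts (convexHull ℝ (Set.range v)) :=
        ⟨subset_convexHull ℝ _ ⟨0, rfl⟩, (hlat 0).2⟩
      have hpos := (Set.ncard_pos (latPts_hull_finite v)).2 ⟨v 0, hv0⟩
      omega
  | succ n ih =>
      intro v hn hlat hai y hy
      by_cases hemp : ∀ x ∈ convexHull ℝ (Set.range v), IsLat x → x ∈ Set.range v
      · exact ⟨v, ⟨hlat, hai, hemp⟩, hy⟩
      · push_neg at hemp
        obtain ⟨u, hu_mem, hu_lat, hu_nr⟩ := hemp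
        have hinj := hai.injective
        obtain ⟨μ, hμ0, hμ1, hμu⟩ := exists_coords v hinj hu_mem
        obtain ⟨t, ht0, ht1, hty⟩ := exists_coords v hinj hy
        have hsub : convexHull ℝ (Set.range v) ⊆ P :=
          convexHull_min (by rintro x ⟨i, rfl⟩; exact (hlat i).1) hconvP
        have hsne : (Finset.univ.filter (fun i => 0 < μ i)).Nonempty := by
          by_contra hne
          rw [Finset.not_nonempty_iff_eq_empty, Finset.filter_eq_empty_iff] at hne
          have : ∑ i, μ i ≤ 0 := Finset.sum_nonpos (fun i _ => le_of_not_gt (hne (Finset.mem_univ i)))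
          rw [hμ1] at this
          linarith
        obtain ⟨j, hjmem, hjmin⟩ := Finset.exists_min_image _ (fun i => t i / μ i) hsne
        have hμj : 0 < μ j := (Finset.mem_filter.1 hjmem).2
        set c := t j / μ j with hc
        have hc0 : 0 ≤ c := div_nonneg (ht0 j) hμj.le
        have hcμj : c * μ j = t j := by
          rw [hc]; field_simp
        have hμjlt : μ j < 1 := by
          rcases lt_or_ge (μ j) 1 with h | h
          · exact h
          · exfalso
            have hsum : ∑ i ∈ Finset.univ.erase j, μ i = 1 - μ j := by
              have := Finset.sum_erase_add Finset.univ μ (Finset.mem_univ j)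
              rw [hμ1] at this
              linarith
            have hge : (0:ℝ) ≤ ∑ i ∈ Finset.univ.erase j, μ i :=
              Finset.sum_nonneg (fun i _ => hμ0 i)
            have hμj1 : μ j = 1 := by linarith
            have hzero : ∀ i ∈ Finset.univ.erase j, μ i = 0 := by
              rw [← Finset.sum_eq_zero_iff_of_nonneg (fun i _ => hμ0 i)]
              rw [hsum, hμj1]; ring
            have huvj : u = v j := by
              rw [hμu, ← Finset.sum_erase_add _ _ (Finset.mem_univ j)]
              rw [Finset.sum_eq_zero (fun i hi => by rw [hzero i hi, zero_smul])]
              rw [zero_add, hμj1, one_smul]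
            exact hu_nr ⟨j, huvj.symm⟩
        set u' := Function.update v j u with hu'def
        set t' : Fin (d+1) → ℝ := fun i => if i = j then c else t i - c * μ i with ht'def
        have hbt : (fun i => (if i = j then 0 else t' i) + t' j * μ i) = t := by
          funext i
          by_cases h : i = j
          · subst h
            simp only [ht'def, eq_self_iff_true, if_true]
            rw [hcμj]; ring
          · simp only [ht'def, if_neg h, eq_self_iff_true, if_true]
            ring
        have hy' : y = ∑ i, t' i • u' i := by
          rw [hu'def, update_sum_smul v u hμu j t', hty]
          exact Finset.sum_congr rfl (fun i _ => by rw [congrFun hbt i])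
        have ht'1 : ∑ i, t' i = 1 := by
          rw [← update_sum_coeff hμ1 j t', ← ht1]
          exact Finset.sum_congr rfl (fun i _ => congrFun hbt i)
        have ht'0 : ∀ i, 0 ≤ t' i := by
          intro i
          by_cases h : i = j
          · subst h; simp only [ht'def, eq_self_iff_true, if_true]; exact hc0
          · simp only [ht'def, if_neg h]
            rcases lt_or_ge 0 (μ i) with hpos | hnonpos
            · have himem : i ∈ Finset.univ.filter (fun i => 0 < μ i) :=
                Finset.mem_filter.2 ⟨Finset.mem_univ i, hpos⟩
              have := hjmin i himem
              have h2 : c * μ i ≤ t i := by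
                rw [hc]
                rw [div_le_div_iff₀ hμj hpos] at this
                calc t j / μ j * μ i = t j * μ i / μ j := by ring
                _ ≤ t i := by
                      rw [div_le_iff₀ hμj]
                      linarith
              linarith
            · have hzero : μ i = 0 := le_antisymm hnonpos (hμ0 i)
              rw [hzero, mul_zero, sub_zero]
              exact ht0 i
        have hmem' : ∀ i, u' i ∈ latPts P := by
          intro i
          by_cases h : i = j
          · subst h; rw [hu'def, Function.update_self]
            exact ⟨hsub hu_mem, hu_lat⟩
          · rw [hu'def, Function.update_of_ne h]
            exact hlat i
        have hai' : AffineIndependent ℝ u' := update_affineIndependent hai hμu hμ1 hμj.ne'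
        have hrange' : Set.range u' ⊆ convexHull ℝ (Set.range v) := by
          rintro x ⟨i, rfl⟩
          by_cases h : i = j
          · subst h; rw [hu'def, Function.update_self]; exact hu_mem
          · rw [hu'def, Function.update_of_ne h]
            exact subset_convexHull ℝ _ ⟨i, rfl⟩
        have hhull' : convexHull ℝ (Set.range u') ⊆ convexHull ℝ (Set.range v) :=
          convexHull_min hrange' (convex_convexHull ℝ _)
        have hy'' : y ∈ convexHull ℝ (Set.range u') :=
          mem_convexHull_of_exists_fintype t' u' ht'0 ht'1
            (fun i => Set.mem_range_self i) hy'.symm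
        have hvj : v j ∉ convexHull ℝ (Set.range u') := by
          intro hmem
          obtain ⟨s', hs0, hs1, hsv⟩ := exists_coords u' hai'.injective hmem
          have hb1 : ∑ i, ((if i = j then 0 else s' i) + s' j * μ i) = 1 := by
            rw [update_sum_coeff hμ1 j s', hs1]
          set δ : Fin (d+1) → ℝ := fun i => if i = j then 1 else 0 with hδdef
          have hδ1 : ∑ i, δ i = 1 := by
            rw [hδdef, Finset.sum_ite_eq' Finset.univ j (fun _ => (1:ℝ))]
            simp
          have hδv : ∑ i, δ i • v i = v j := by
            have : ∀ i, δ i • v i = if i = j then v j else 0 := by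
              intro i
              by_cases h : i = j
              · subst h; simp [hδdef]
              · simp [hδdef, h]
            rw [Finset.sum_congr rfl (fun i _ => this i),
              Finset.sum_ite_eq' Finset.univ j (fun _ => v j)]
            simp
          have hbv : ∑ i, ((if i = j then 0 else s' i) + s' j * μ i) • v i = ∑ i, δ i • v i := by
            rw [← update_sum_smul v u hμu j s', hδv, ← hu'def, ← hsv]
          have heqc := coords_unique hai hb1 hδ1 hbv
          have hbj : s' j * μ j = 1 := by
            have h := congrFun heqc j
            simp only [hδdef, eq_self_iff_true, if_true, zero_add] at h
            exact h
          have hs'le : s' j ≤ 1 := by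
            have h := Finset.single_le_sum (f := s') (fun i _ => hs0 i) (Finset.mem_univ j)
            rw [hs1] at h
            exact h
          nlinarith [hs0 j]
        have hss : latPts (convexHull ℝ (Set.range u')) ⊂ latPts (convexHull ℝ (Set.range v)) := by
          constructor
          · intro x hx
            exact ⟨hhull' hx.1, hx.2⟩
          · intro hcon
            exact hvj (hcon ⟨subset_convexHull ℝ _ ⟨j, rfl⟩, (hlat j).2⟩).1
        have hlt := Set.ncard_lt_ncard hss (latPts_hull_finite v)
        exact ih u' (by omega) hmem' hai' y hy''

/-- Every point of an integral polytope lies in an empty simplex of full dimension. -/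
lemma exists_empty_simplex {P : Set (Pt N)} {V : Finset (Pt N)}
    (hV : ∀ v ∈ V, IsLat v) (hPV : P = convexHull ℝ (V : Set (Pt N)))
    {y : Pt N} (hy : y ∈ P) :
    ∃ v : Fin (polyDim P + 1) → Pt N, EmptySimplexIn P (polyDim P) v ∧
      y ∈ convexHull ℝ (Set.range v) := by
  classical
  have hconvP : Convex ℝ P := hPV ▸ convex_convexHull ℝ _
  have hy' : y ∈ convexHull ℝ (V : Set (Pt N)) := hPV ▸ hy
  rw [convexHull_eq_union] at hy'
  simp only [Set.mem_iUnion] at hy'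
  obtain ⟨tf, hts, htai, hyt⟩ := hy'
  have htne : tf.Nonempty := by
    by_contra h
    rw [Finset.not_nonempty_iff_eq_empty] at h
    rw [h, Finset.coe_empty, convexHull_empty] at hyt
    exact hyt
  set n := tf.card with hndef
  have hcard : Fintype.card {x // x ∈ tf} = n := Fintype.card_coe tf
  have hn1 : 1 ≤ n := Finset.card_pos.2 htne
  set e := (Fintype.equivFinOfCardEq hcard).symm with hedef
  set w : Fin n → Pt N := fun i => (e i : Pt N) with hwdef
  have hwai : AffineIndependent ℝ w := htai.comp_embedding e.toEmbedding
  have hwrange : Set.range w = (tf : Set (Pt N)) := by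
    ext x
    constructor
    · rintro ⟨i, rfl⟩; exact (e i).2
    · intro hx; exact ⟨e.symm ⟨x, hx⟩, by simp [hwdef]⟩
  obtain ⟨m, hm⟩ : ∃ m, n = m + 1 := ⟨n - 1, by omega⟩
  set w' : Fin (m+1) → Pt N := w ∘ (finCongr hm.symm) with hw'def
  have hw'range : Set.range w' = Set.range w := by
    ext x
    constructor
    · rintro ⟨i, rfl⟩; exact ⟨finCongr hm.symm i, rfl⟩
    · rintro ⟨i, rfl⟩; exact ⟨finCongr hm i, by simp [hw'def]⟩
  have hVlat : (V : Set (Pt N)) ⊆ latPts P := fun x hx =>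
    ⟨hPV ▸ subset_convexHull ℝ (V : Set (Pt N)) hx, hV x hx⟩
  have hw'lat : ∀ i, w' i ∈ latPts P := by
    intro i
    apply hVlat
    apply hts
    have : w' i ∈ Set.range w' := Set.mem_range_self i
    rw [hw'range, hwrange] at this
    exact this
  have hw'ai : AffineIndependent ℝ w' := hwai.comp_embedding (finCongr hm.symm).toEmbedding
  have hVfd : FiniteDimensional ℝ (vectorSpan ℝ (V : Set (Pt N))) :=
    finiteDimensional_vectorSpan_of_finite ℝ V.finite_toSet
  have hvspan : vectorSpan ℝ P = vectorSpan ℝ (V : Set (Pt N)) := by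
    rw [← direction_affineSpan, ← direction_affineSpan, hPV, affineSpan_convexHull]
  haveI : FiniteDimensional ℝ (vectorSpan ℝ P) := hvspan ▸ hVfd
  have hle : m ≤ polyDim P := by
    have h1 : vectorSpan ℝ (Set.range w') ≤ vectorSpan ℝ P := by
      apply vectorSpan_mono
      rintro x ⟨i, rfl⟩
      exact (hw'lat i).1
    have h2 : Module.finrank ℝ (vectorSpan ℝ (Set.range w')) = m :=
      hw'ai.finrank_vectorSpan (by simp)
    have hpd : polyDim P = Module.finrank ℝ (vectorSpan ℝ P) := by
      unfold polyDim; rw [direction_affineSpan]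
    rw [hpd, ← h2]
    exact Submodule.finrank_mono h1
  obtain ⟨v', hlat', hai', hsubr⟩ :=
    extend_simplex hV hPV (polyDim P - m) m w' (by omega) hw'lat hw'ai
  have hyr : y ∈ convexHull ℝ (Set.range v') := by
    apply convexHull_mono hsubr
    rw [hw'range, hwrange]
    exact hyt
  exact exists_empty_simplex_aux hconvP (latPts (convexHull ℝ (Set.range v'))).ncard v'
    le_rfl hlat' hai' y hyr

end Geo

/-- `μ_Hilb(P) ≤ max (μ_hole(P), 1)`: every element of the minimal
Hilbert basis has degree at most the maximum of `1` and a bound on the degrees of holes. -/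
theorem hilb_le_hole {N : ℕ} (P : Set (Pt N))
    (hP : IsIntegralPolytope P)
    (H : Set (Pt N × ℝ)) (hH : IsMinHilbertBasis P H)
    (M : ℕ) (hM : ∀ p ∈ boxP P (polyDim P), p.2 ≤ (M : ℝ)) :
    ∀ p ∈ H, p.2 ≤ max (M : ℝ) 1 := by
  classical
  obtain ⟨V, hV, hPV⟩ := hP
  obtain ⟨⟨hHfin, hHsub, hHgen⟩, hmin⟩ := hH
  have hconvP : Convex ℝ P := hPV ▸ convex_convexHull ℝ _
  set H' : Set (Pt N × ℝ) := {p ∈ coneLat P | p.2 ≤ max (M:ℝ) 1} with hH'def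
  obtain ⟨R, hR0, hRb⟩ := poly_bound V
  have hmax1 : (1:ℝ) ≤ max (M:ℝ) 1 := le_max_right _ _
  have hmax0 : (0:ℝ) ≤ max (M:ℝ) 1 := by linarith
  -- finiteness of H'
  have hH'fin : H'.Finite := by
    apply (finite_latBox (max (M:ℝ) 1 * (R + 1))).subset
    rintro ⟨x, deg⟩ ⟨⟨⟨mm, c, wf, hcw, hx, hdeg⟩, hlat, z, hz⟩, hle⟩
    replace hle : deg ≤ max (M:ℝ) 1 := hle
    replace hx : x = ∑ k, c k • wf k := hx
    replace hdeg : deg = ∑ k, c k := hdeg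
    replace hlat : IsLat x := hlat
    replace hz : deg = (z : ℝ) := hz
    have hdeg0 : 0 ≤ deg := hdeg ▸ Finset.sum_nonneg (fun i _ => (hcw i).1)
    refine ⟨⟨hlat, z, hz⟩, fun i => ?_, ?_⟩
    · have hxi : x i = ∑ k, c k * wf k i := by
        rw [hx]; simp [Finset.sum_apply]
      have h1 : |x i| ≤ ∑ k, |c k * wf k i| := by
        rw [hxi]; exact Finset.abs_sum_le_sum_abs _ _
      have h3 : ∑ k, |c k * wf k i| ≤ ∑ k, c k * R := by
        apply Finset.sum_le_sum
        intro k _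
        rw [abs_mul, abs_of_nonneg (hcw k).1]
        have hwk : wf k ∈ convexHull ℝ (V : Set (Pt N)) := by
          have := (hcw k).2; rwa [hPV] at this
        exact mul_le_mul_of_nonneg_left (hRb _ hwk i) (hcw k).1
      have h4 : ∑ k, c k * R = deg * R := by rw [← Finset.sum_mul, ← hdeg]
      nlinarith [h1, h3, h4]
    · rw [abs_of_nonneg hdeg0]
      nlinarith [hle]
  have hH'sub : H' ⊆ coneLat P := fun p hp => hp.1
  -- (v,1) for lattice points of P is in H'
  have hlatH' : ∀ x ∈ latPts P, ((x, (1:ℝ)) : Pt N × ℝ) ∈ H' := by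
    intro x hxl
    refine ⟨⟨⟨1, fun _ => 1, fun _ => x, fun _ => ⟨zero_le_one, hxl.1⟩, by simp, by simp⟩,
      hxl.2, 1, by norm_num⟩, ?_⟩
    exact hmax1
  -- generation
  have hkey : coneLat P ⊆ (AddSubmonoid.closure H' : Set (Pt N × ℝ)) := by
    rintro ⟨x, deg⟩ ⟨⟨mm, c, wf, hcw, hx, hdeg⟩, hlat, z, hz⟩
    replace hlat : IsLat x := hlat
    replace hz : deg = (z : ℝ) := hz
    replace hx : x = ∑ k, c k • wf k := hx
    replace hdeg : deg = ∑ k, c k := hdeg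
    have hdeg0 : 0 ≤ deg := hdeg ▸ Finset.sum_nonneg (fun i _ => (hcw i).1)
    rcases eq_or_lt_of_le hdeg0 with hdegz | hdegpos
    · -- degree zero
      have hcz : ∀ k, c k = 0 := by
        intro k
        have hsum : ∑ k, c k = 0 := by rw [← hdeg, ← hdegz]
        exact (Finset.sum_eq_zero_iff_of_nonneg (fun i _ => (hcw i).1)).1 hsum k
          (Finset.mem_univ k)
      have hx0 : x = 0 := by
        rw [hx]; apply Finset.sum_eq_zero; intro k _; rw [hcz k, zero_smul]
      have hp0 : ((x, deg) : Pt N × ℝ) = 0 := by rw [hx0, ← hdegz]; rfl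
      rw [hp0]
      exact (AddSubmonoid.closure H').zero_mem
    · -- positive degree
      set y : Pt N := deg⁻¹ • x with hydef
      have hyP : y ∈ P := by
        have hyeq : y = ∑ k, (deg⁻¹ * c k) • wf k := by
          rw [hydef, hx, Finset.smul_sum]
          apply Finset.sum_congr rfl
          intro k _
          rw [smul_smul]
        rw [hyeq]
        apply hconvP.sum_mem (fun k _ => mul_nonneg (inv_nonneg.2 hdeg0) (hcw k).1) ?_
          (fun k _ => (hcw k).2)
        rw [← Finset.mul_sum, ← hdeg, inv_mul_cancel₀ hdegpos.ne']
      obtain ⟨v, hes, hyv⟩ := exists_empty_simplex hV hPV hyP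
      obtain ⟨hvlat, hvai, hvempty⟩ := hes
      obtain ⟨t, ht0, ht1, hyt⟩ := exists_coords v hvai.injective hyv
      set lam : Fin (polyDim P + 1) → ℝ := fun i => deg * t i with hlamdef
      have hlam0 : ∀ i, 0 ≤ lam i := fun i => mul_nonneg hdeg0 (ht0 i)
      have hxlam : x = ∑ i, lam i • v i := by
        have hxy : x = deg • y := by
          rw [hydef, smul_smul, mul_inv_cancel₀ hdegpos.ne', one_smul]
        rw [hxy, hyt, Finset.smul_sum]
        apply Finset.sum_congr rfl
        intro i _
        rw [smul_smul]
      have hsumlam : ∑ i, lam i = deg := by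
        rw [hlamdef, ← Finset.mul_sum, ht1, mul_one]
      set kk : Fin (polyDim P + 1) → ℕ := fun i => ⌊lam i⌋₊ with hkkdef
      set r : Fin (polyDim P + 1) → ℝ := fun i => lam i - kk i with hrdef
      have hr0 : ∀ i, 0 ≤ r i := fun i => sub_nonneg.2 (Nat.floor_le (hlam0 i))
      have hr1 : ∀ i, r i < 1 := by
        intro i
        have := Nat.lt_floor_add_one (lam i)
        simp only [hrdef]
        linarith
      set qx : Pt N := ∑ i, r i • v i with hqxdef
      set qd : ℝ := ∑ i, r i with hqddef
      have hkvlat : IsLat (∑ i, (kk i : ℝ) • v i) :=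
        isLat_sum _ _ (fun i _ => (hvlat i).2.nsmul (kk i))
      have hqxlat : IsLat qx := by
        have hq : qx = x - ∑ i, (kk i : ℝ) • v i := by
          rw [hqxdef, hxlam, ← Finset.sum_sub_distrib]
          apply Finset.sum_congr rfl
          intro i _
          rw [hrdef, sub_smul]
        rw [hq]
        exact hlat.sub hkvlat
      have hqdint : ∃ zz : ℤ, qd = (zz : ℝ) := by
        refine ⟨z - ∑ i, (kk i : ℤ), ?_⟩
        have : qd = deg - ∑ i, (kk i : ℝ) := by
          rw [hqddef, ← hsumlam, ← Finset.sum_sub_distrib]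
        rw [this, hz]
        push_cast
        ring
      have hqcone : ((qx, qd) : Pt N × ℝ) ∈ coneLat P :=
        ⟨⟨polyDim P + 1, r, v, fun i => ⟨hr0 i, (hvlat i).1⟩, rfl, rfl⟩, hqxlat, hqdint⟩
      have hterm : ∀ i, kk i • ((v i, (1:ℝ)) : Pt N × ℝ) = ((kk i : ℝ) • v i, (kk i : ℝ)) := by
        intro i
        rw [← Nat.cast_smul_eq_nsmul ℝ]
        apply Prod.ext
        · rfl
        · simp
      have hdecomp : ((x, deg) : Pt N × ℝ)
          = (∑ i, kk i • ((v i, (1:ℝ)) : Pt N × ℝ)) + (qx, qd) := by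
        rw [Finset.sum_congr rfl (fun i _ => hterm i)]
        apply Prod.ext
        · show x = (∑ i, (((kk i : ℝ) • v i, (kk i : ℝ)) : Pt N × ℝ)).1 + qx
          rw [Prod.fst_sum, hqxdef, hxlam, ← Finset.sum_add_distrib]
          apply Finset.sum_congr rfl
          intro i _
          rw [hrdef, ← add_smul]
          congr 1
          ring
        · show deg = (∑ i, (((kk i : ℝ) • v i, (kk i : ℝ)) : Pt N × ℝ)).2 + qd
          rw [Prod.snd_sum, hqddef, ← hsumlam, ← Finset.sum_add_distrib]
          apply Finset.sum_congr rfl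
          intro i _
          rw [hrdef]
          ring
      rw [hdecomp]
      apply add_mem
      · apply AddSubmonoid.sum_mem
        intro i _
        exact nsmul_mem (AddSubmonoid.subset_closure (hlatH' _ (hvlat i))) _
      · by_cases hqg : ((qx, qd) : Pt N × ℝ) ∈ genMonoid P
        · obtain ⟨mm', f, hf, hq1, hq2⟩ := hqg
          have hqsum : ((qx, qd) : Pt N × ℝ) = ∑ i : Fin mm', ((f i, (1:ℝ)) : Pt N × ℝ) := by
            apply Prod.ext
            · show qx = (∑ i : Fin mm', ((f i, (1:ℝ)) : Pt N × ℝ)).1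
              rw [Prod.fst_sum]
              exact hq1
            · show qd = (∑ i : Fin mm', ((f i, (1:ℝ)) : Pt N × ℝ)).2
              rw [Prod.snd_sum]
              replace hq2 : qd = (mm' : ℝ) := hq2
              rw [hq2]
              simp
          rw [hqsum]
          apply AddSubmonoid.sum_mem
          intro i _
          exact AddSubmonoid.subset_closure (hlatH' _ (hf i))
        · have hbox : ((qx, qd) : Pt N × ℝ) ∈ boxP P (polyDim P) := by
            constructor
            · apply Set.mem_biUnion (show v ∈ {v | EmptySimplexIn P (polyDim P) v} from
                ⟨hvlat, hvai, hvempty⟩)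
              exact ⟨r, fun i => ⟨hr0 i, hr1 i⟩, rfl, rfl, hqxlat, hqdint⟩
            · exact hqg
          have hqd := hM _ hbox
          exact AddSubmonoid.subset_closure ⟨hqcone, hqd.trans (le_max_left _ _)⟩
  have hHH' : H ⊆ H' := hmin H' ⟨hH'fin, hH'sub, hkey⟩
  intro p hp
  exact (hHH' hp).2
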